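/- Let p be prime and Φ the cellular automaton on (ℤ/pℤ)^ℤ with local rule φ(t_0, t_1, ..., t_r) = t_0 + θ(t_1, ..., t_r) for some function θ and r > 0. If the forward orbit {Φ^n(x) : n ≥ 0} is infinite and (x_1, x_2, ...) is Φ_R-fixed, then Φ restricted to cl{Φ^n(x) : n ≥ 0} is topologically conjugate to the p-adic odometer (the '+1' map on ℤ_p = ∏_{n≥1} ℤ/pℤ with carrying). -/
import Mathlib

/-- The carry bit at position `n` when adding `(1,0,0,...)` to `z` in `∏ ℤ/s_nℤ`. -/
def odoCarry {s : ℕ → ℕ} (z : ∀ n, ZMod (s n)) : ℕ → Bool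
  | 0 => true
  | n + 1 => odoCarry z n && decide (z n + 1 = 0)

/-- The `(s 0, s 1, ...)`-adic odometer: the `+1` map with carrying on `∏ ℤ/s_nℤ`. -/
def odometer (s : ℕ → ℕ) (z : ∀ n, ZMod (s n)) : ∀ n, ZMod (s n) :=
  fun n => if odoCarry z n then z n + 1 else z n

/-- The forward orbit `{Φ^n(x) : n ≥ 0}`. -/
def fwdOrbit {A : Type*} (Φ : (ℤ → A) → ℤ → A) (x : ℤ → A) : Set (ℤ → A) :=
  Set.range fun n : ℕ => Φ^[n] x

/-- `Φ` restricted to the closure of the forward orbit of `x` is topologically conjugate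
to the `(s 0, s 1, ...)`-adic odometer. -/
def ConjToOdometer {A : Type*} [TopologicalSpace A]
    (Φ : (ℤ → A) → ℤ → A) (x : ℤ → A) (s : ℕ → ℕ) : Prop :=
  ∃ (h : Set.MapsTo Φ (closure (fwdOrbit Φ x)) (closure (fwdOrbit Φ x)))
    (Ψ : closure (fwdOrbit Φ x) ≃ₜ ∀ n, ZMod (s n)),
    ∀ y : closure (fwdOrbit Φ x), Ψ ⟨Φ y, h y.2⟩ = odometer s (Ψ y)

namespace ConjOdoAux

theorem sum_shift {M : Type*} [AddCommMonoid M] (u : ℕ → M) (q : ℕ)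
    (hu : ∀ n, u (n + q) = u n) : ∀ n, ∑ t ∈ Finset.range q, u (n + t) = ∑ t ∈ Finset.range q, u t := by
  intro n
  induction n with
  | zero => simp
  | succ n ih =>
    rw [← ih]
    cases q with
    | zero => simp
    | succ q' =>
      rw [Finset.sum_range_succ, Finset.sum_range_succ' (fun t => u (n + t)) q']
      have h1 : ∀ t, n + 1 + t = n + (t + 1) := by omega
      have h2 : u (n + 1 + q') = u (n + 0) := by
        have : n + 1 + q' = (n + 0) + (q' + 1) := by omega
        rw [this, hu]
      rw [h2]
      exact congrArg (· + u (n + 0)) (Finset.sum_congr rfl fun t _ => by rw [h1])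

def pval (p k : ℕ) (z : ℕ → ZMod p) : ℕ := ∑ i ∈ Finset.range k, (z i).val * p ^ i

theorem pval_succ (p k : ℕ) (z : ℕ → ZMod p) :
    pval p (k+1) z = pval p k z + (z k).val * p ^ k := Finset.sum_range_succ _ _

theorem pval_lt {p : ℕ} (hp : 1 < p) (k : ℕ) (z : ℕ → ZMod p) : pval p k z < p ^ k := by
  haveI : NeZero p := ⟨by omega⟩
  induction k with
  | zero => simp [pval]
  | succ k ih =>
    rw [pval_succ, pow_succ]
    have h1 : (z k).val + 1 ≤ p := ZMod.val_lt _
    have hpk : 0 < p ^ k := pow_pos (by omega) k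
    have h2 : ((z k).val + 1) * p ^ k ≤ p ^ k * p := by
      calc ((z k).val + 1) * p ^ k ≤ p * p ^ k := Nat.mul_le_mul_right _ h1
        _ = p ^ k * p := mul_comm _ _
    nlinarith

theorem pval_mod_pow {p : ℕ} (hp : 1 < p) (z : ℕ → ZMod p) {k K : ℕ} (h : k ≤ K) :
    pval p K z % p ^ k = pval p k z := by
  induction K with
  | zero =>
    have : k = 0 := by omega
    subst this
    simp [pval]
  | succ K ih =>
    rcases Nat.lt_or_ge k (K + 1) with hk | hk
    · have hk' : k ≤ K := by omega
      have hdvd : p ^ k ∣ (z K).val * p ^ K := Dvd.dvd.mul_left (pow_dvd_pow p hk') _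
      rw [pval_succ, Nat.add_mod, ih hk', Nat.mod_eq_zero_of_dvd hdvd, Nat.add_zero,
        Nat.mod_eq_of_lt (pval_lt hp _ z)]
    · have : k = K + 1 := by omega
      subst this
      exact Nat.mod_eq_of_lt (pval_lt hp _ z)

theorem pval_digits {p : ℕ} (hp : 1 < p) (a k : ℕ) :
    pval p k (fun n => ((a / p ^ n : ℕ) : ZMod p)) = a % p ^ k := by
  haveI : NeZero p := ⟨by omega⟩
  induction k with
  | zero => simp [pval, Nat.mod_one]
  | succ k ih =>
    rw [pval_succ, ih, ZMod.val_natCast, pow_succ, Nat.mod_mul]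
    ring

theorem pval_inj {p : ℕ} (hp : 1 < p) {z z' : ℕ → ZMod p}
    (h : ∀ k, pval p k z = pval p k z') : z = z' := by
  haveI : NeZero p := ⟨by omega⟩
  funext n
  have h1 := h n
  have h2 := h (n+1)
  rw [pval_succ, pval_succ, h1] at h2
  have h3 : (z n).val = (z' n).val :=
    Nat.eq_of_mul_eq_mul_right (pow_pos (by omega) n) (Nat.add_left_cancel h2)
  exact ZMod.val_injective p h3

theorem val_succ_of_ne {p : ℕ} (hp : 1 < p) (a : ZMod p) (ha : a + 1 ≠ 0) :
    (a + 1).val = a.val + 1 ∧ a.val + 1 < p := by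
  haveI : NeZero p := ⟨by omega⟩
  have hcast : ((a.val + 1 : ℕ) : ZMod p) = a + 1 := by
    push_cast
    rw [ZMod.natCast_val, ZMod.cast_id]
  have hlt : a.val + 1 < p := by
    rcases Nat.lt_or_ge (a.val + 1) p with h | h
    · exact h
    · exfalso
      have : a.val + 1 = p := by have := ZMod.val_lt a; omega
      rw [this, ZMod.natCast_self] at hcast
      exact ha hcast.symm
  refine ⟨?_, hlt⟩
  rw [← hcast, ZMod.val_natCast, Nat.mod_eq_of_lt hlt]

theorem val_eq_pred_of_eq_zero {p : ℕ} (hp : 1 < p) (a : ZMod p) (ha : a + 1 = 0) :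
    a.val + 1 = p := by
  haveI : NeZero p := ⟨by omega⟩
  have hcast : ((a.val + 1 : ℕ) : ZMod p) = 0 := by
    push_cast
    rw [ZMod.natCast_val, ZMod.cast_id]
    exact ha
  have hdvd : p ∣ a.val + 1 := (ZMod.natCast_eq_zero_iff _ _).mp hcast
  have := Nat.le_of_dvd (by omega) hdvd
  have := ZMod.val_lt a
  omega

theorem odo_main {p : ℕ} (hp : 1 < p) (z : ℕ → ZMod p) (k : ℕ) :
    (odoCarry z k = true → pval p k (odometer (fun _ => p) z) = 0 ∧ pval p k z + 1 = p ^ k) ∧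
    (odoCarry z k = false →
      pval p k (odometer (fun _ => p) z) = pval p k z + 1 ∧ pval p k z + 1 < p ^ k) := by
  haveI : NeZero p := ⟨by omega⟩
  induction k with
  | zero =>
    constructor
    · intro _; simp [pval]
    · intro h; simp [odoCarry] at h
  | succ k ih =>
    have hcarry : odoCarry z (k+1) = (odoCarry z k && decide (z k + 1 = 0)) := rfl
    have hodok : odometer (fun _ => p) z k = if odoCarry z k then z k + 1 else z k := rfl
    constructor
    · intro h
      rw [hcarry, Bool.and_eq_true, decide_eq_true_iff] at h
      obtain ⟨h1, h2⟩ := h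
      obtain ⟨hA, hB⟩ := ih.1 h1
      have hval : (z k).val + 1 = p := val_eq_pred_of_eq_zero hp _ h2
      constructor
      · rw [pval_succ, hA, hodok, if_pos h1, h2]
        simp
      · rw [pval_succ, pow_succ]
        calc pval p k z + (z k).val * p ^ k + 1
            = p ^ k + (z k).val * p ^ k := by omega
          _ = ((z k).val + 1) * p ^ k := by ring
          _ = p * p ^ k := by rw [hval]
          _ = p ^ k * p := mul_comm _ _
    · intro h
      rw [hcarry] at h
      cases hck : odoCarry z k with
      | false =>
        obtain ⟨hA, hB⟩ := ih.2 hck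
        have h1 : (z k).val + 1 ≤ p := ZMod.val_lt _
        have hpk : 0 < p ^ k := pow_pos (by omega) k
        have hmul : ((z k).val + 1) * p ^ k ≤ p ^ k * p := by
          calc ((z k).val + 1) * p ^ k ≤ p * p ^ k := Nat.mul_le_mul_right _ h1
            _ = p ^ k * p := mul_comm _ _
        constructor
        · rw [pval_succ, pval_succ, hA, hodok, if_neg (by simp [hck])]
          omega
        · rw [pval_succ, pow_succ]
          nlinarith
      | true =>
        rw [hck, Bool.true_and, decide_eq_false_iff_not] at h
        obtain ⟨hA, hB⟩ := ih.1 hck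
        obtain ⟨hv1, hv2⟩ := val_succ_of_ne hp (z k) h
        have hpk : 0 < p ^ k := pow_pos (by omega) k
        constructor
        · rw [pval_succ, pval_succ, hA, hodok, if_pos hck, hv1]
          calc 0 + ((z k).val + 1) * p ^ k = p ^ k + (z k).val * p ^ k := by ring
            _ = pval p k z + (z k).val * p ^ k + 1 := by omega
        · rw [pval_succ, pow_succ]
          have : ((z k).val + 1 + 1) * p ^ k ≤ p * p ^ k := Nat.mul_le_mul_right _ (by omega)
          nlinarith

theorem pval_odometer {p : ℕ} (hp : 1 < p) (z : ℕ → ZMod p) (k : ℕ) :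
    pval p k (odometer (fun _ => p) z) = (pval p k z + 1) % p ^ k := by
  cases hck : odoCarry z k with
  | true =>
    obtain ⟨hA, hB⟩ := (odo_main hp z k).1 hck
    rw [hA, hB, Nat.mod_self]
  | false =>
    obtain ⟨hA, hB⟩ := (odo_main hp z k).2 hck
    rw [hA, Nat.mod_eq_of_lt hB]

def Win (p m : ℕ) (y z : ℤ → ZMod p) : Prop := ∀ i : ℤ, 1 - (m:ℤ) ≤ i → y i = z i

theorem Win.rfl {p m : ℕ} (y : ℤ → ZMod p) : Win p m y y := fun _ _ => Eq.refl _

theorem Win.symm {p m : ℕ} {y z : ℤ → ZMod p} (h : Win p m y z) : Win p m z y :=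
  fun i hi => (h i hi).symm

theorem Win.trans {p m : ℕ} {y z w : ℤ → ZMod p} (h : Win p m y z) (h' : Win p m z w) :
    Win p m y w := fun i hi => (h i hi).trans (h' i hi)

theorem Win.mono {p m m' : ℕ} (hm : m ≤ m') {y z : ℤ → ZMod p} (h : Win p m' y z) :
    Win p m y z := fun i hi => h i (by
      have h2 : (m:ℤ) ≤ (m':ℤ) := Int.ofNat_le.mpr hm
      omega)

theorem period_lemma {p r : ℕ} (hp : p.Prime)
    (θ : (Fin r → ZMod p) → ZMod p) (F : ℕ → ℤ → ZMod p)
    (hstep : ∀ (n : ℕ) (i : ℤ), F (n+1) i = F n i + θ (fun j : Fin r => F n (i + 1 + (j:ℕ))))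
    (hfroz : ∀ (n : ℕ) (i : ℤ), 1 ≤ i → F (n+1) i = F n i)
    (m : ℕ) :
    ∃ j : ℕ, (∀ n : ℕ, Win p m (F (n + p ^ j)) (F n)) ∧
      (∀ a b : ℕ, Win p m (F a) (F b) → a ≡ b [MOD p ^ j]) := by
  haveI : Fact p.Prime := ⟨hp⟩
  haveI : NeZero p := ⟨hp.ne_zero⟩
  induction m with
  | zero =>
    refine ⟨0, ?_, ?_⟩
    · intro n i hi
      have hi' : 1 ≤ i := by simpa using hi
      rw [pow_zero]
      exact hfroz n i hi'
    · intro a b _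
      rw [pow_zero]
      exact Nat.modEq_one
  | succ m ih =>
    obtain ⟨j, ha, hb⟩ := ih
    set q := p ^ j with hq
    have hq0 : 0 < q := pow_pos hp.pos j
    set i₀ : ℤ := -(m:ℤ) with hi₀
    set u : ℕ → ZMod p := fun n => θ (fun j' : Fin r => F n (i₀ + 1 + (j':ℕ))) with hu
    have hustep : ∀ n, F (n+1) i₀ = F n i₀ + u n := fun n => hstep n i₀
    have huper : ∀ n, u (n + q) = u n := by
      intro n
      simp only [hu]
      congr 1
      funext j'
      exact ha n (i₀ + 1 + (j':ℕ)) (by omega)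
    have hsum : ∀ n s, F (n + s) i₀ = F n i₀ + ∑ t ∈ Finset.range s, u (n + t) := by
      intro n s
      induction s with
      | zero => simp
      | succ s ihs =>
        have : n + (s + 1) = (n + s) + 1 := by omega
        rw [this, hustep, ihs, Finset.sum_range_succ, add_assoc]
    set D : ZMod p := ∑ t ∈ Finset.range q, u t with hD
    have hDs : ∀ n s, F (n + s * q) i₀ = F n i₀ + s • D := by
      intro n s
      induction s with
      | zero => simp
      | succ s ihs =>
        have h1 : n + (s+1) * q = (n + s * q) + q := by ring
        rw [h1, hsum, sum_shift u q huper, ihs, succ_nsmul, add_assoc]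
    -- window iterate for old window
    have haIter : ∀ s n, Win p m (F (n + s * q)) (F n) := by
      intro s
      induction s with
      | zero => intro n; simpa using Win.rfl (F n)
      | succ s ihs =>
        intro n i hi
        have h1 : n + (s+1) * q = (n + s * q) + q := by ring
        rw [h1]
        exact (ha (n + s * q) i hi).trans (ihs n i hi)
    by_cases hD0 : D = 0
    · refine ⟨j, ?_, ?_⟩
      · intro n i hi
        by_cases hi' : 1 - (m:ℤ) ≤ i
        · exact ha n i hi'
        · have hie : i = i₀ := by push_cast at hi; omega
          subst hie
          have := hDs n 1
          rw [one_mul, one_smul, hD0, add_zero] at this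
          exact this
      · intro a b hab
        exact hb a b fun i hi => hab i (by push_cast at hi ⊢; omega)
    · refine ⟨j + 1, ?_, ?_⟩
      · intro n i hi
        have hpow : p ^ (j+1) = p * q := by rw [pow_succ]; ring
        by_cases hi' : 1 - (m:ℤ) ≤ i
        · rw [hpow]
          exact haIter p n i hi'
        · have hie : i = i₀ := by push_cast at hi; omega
          subst hie
          have hpD : p • D = 0 := by rw [nsmul_eq_mul, ZMod.natCast_self, zero_mul]
          rw [hpow, hDs n p, hpD, add_zero]
      · intro a b hab
        have key : ∀ a b : ℕ, a ≤ b → Win p (m+1) (F a) (F b) → a ≡ b [MOD p ^ (j+1)] := by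
          intro a b hle hab
          have hab' : a ≡ b [MOD q] := hb a b fun i hi => hab i (by push_cast at hi ⊢; omega)
          obtain ⟨c, hc⟩ := (Nat.modEq_iff_dvd' hle).mp hab'
          have hbc : b = a + c * q := by rw [Nat.mul_comm] at hc; omega
          have h0 : F a i₀ = F b i₀ := hab i₀ (by push_cast; omega)
          have h1 : F b i₀ = F a i₀ + c • D := by rw [hbc]; exact hDs a c
          have h2 : (c : ZMod p) * D = 0 := by
            rw [← nsmul_eq_mul]
            exact (left_eq_add.mp (h0.trans h1))
          have h3 : (c : ZMod p) = 0 := by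
            rcases mul_eq_zero.mp h2 with h | h
            · exact h
            · exact absurd h hD0
          have h4 : p ∣ c := (ZMod.natCast_eq_zero_iff _ _).mp h3
          obtain ⟨d, hd⟩ := h4
          refine (Nat.modEq_iff_dvd' hle).mpr ⟨d, ?_⟩
          rw [hc, hd, pow_succ]
          ring
        rcases Nat.le_total a b with h | h
        · exact key a b h hab
        · exact (key b a h hab.symm).symm

end ConjOdoAux

open ConjOdoAux in
/-- Theorem 4: for the left permutive cellular automaton on `(ℤ/pℤ)^ℤ`, `p` prime, with
local rule `t_0 + θ(t_1,...,t_r)`, `r > 0`: if the forward orbit of `x` is infinite and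
`(x_1,x_2,...)` is `Φ_R`-fixed, then `Φ` on the orbit closure of `x` is topologically
conjugate to the `p`-adic odometer. -/
theorem conj_to_p_adic_odometer {p r : ℕ} (hp : p.Prime) (hr : 0 < r)
    (θ : (Fin r → ZMod p) → ZMod p)
    (Φ : (ℤ → ZMod p) → ℤ → ZMod p) (ΦR : (ℕ → ZMod p) → ℕ → ZMod p)
    (hΦ : ∀ x i, Φ x i = x i + θ fun j : Fin r => x (i + 1 + (j : ℕ)))
    (hΦR : ∀ x n, ΦR x n = x n + θ fun j : Fin r => x (n + 1 + (j : ℕ)))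
    (x : ℤ → ZMod p)
    (hinf : (fwdOrbit Φ x).Infinite)
    (hfix : ΦR (fun n : ℕ => x ((n : ℤ) + 1)) = fun n : ℕ => x ((n : ℤ) + 1)) :
    ConjToOdometer Φ x fun _ => p := by
  classical
  haveI : Fact p.Prime := ⟨hp⟩
  haveI : NeZero p := ⟨hp.ne_zero⟩
  have hp1 : 1 < p := hp.one_lt
  set F : ℕ → ℤ → ZMod p := fun n => Φ^[n] x with hFdef
  set C : Set (ℤ → ZMod p) := closure (fwdOrbit Φ x) with hCdef
  have hFs : ∀ n, F (n+1) = Φ (F n) := fun n => Function.iterate_succ_apply' Φ n x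
  -- θ vanishes on shifted windows of x
  have hθ0 : ∀ i : ℤ, 1 ≤ i → θ (fun j : Fin r => x (i + 1 + (j:ℕ))) = 0 := by
    intro i hi
    have h1 := congrFun hfix (i - 1).toNat
    rw [hΦR] at h1
    have h1' : x (((i-1).toNat : ℤ) + 1)
        + θ (fun j : Fin r => x ((((i-1).toNat + 1 + (j:ℕ) : ℕ) : ℤ) + 1))
        = x (((i-1).toNat : ℤ) + 1) := h1
    have h3 : (fun j : Fin r => x ((((i-1).toNat + 1 + (j:ℕ) : ℕ) : ℤ) + 1))
        = (fun j : Fin r => x (i + 1 + (j:ℕ))) := by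
      funext j
      congr 1
      push_cast
      omega
    rw [h3] at h1'
    exact add_eq_left.mp h1'
  have hstep : ∀ (n:ℕ) (i:ℤ), F (n+1) i = F n i + θ (fun j : Fin r => F n (i + 1 + (j:ℕ))) := by
    intro n i
    rw [hFs]
    exact hΦ (F n) i
  have hfrozen : ∀ (n:ℕ) (i:ℤ), 1 ≤ i → F n i = x i := by
    intro n
    induction n with
    | zero => intro i _; rfl
    | succ n ih =>
      intro i hi
      rw [hstep]
      have h3 : (fun j : Fin r => F n (i + 1 + (j:ℕ))) = fun j : Fin r => x (i + 1 + (j:ℕ)) := by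
        funext j
        exact ih _ (by have := Int.natCast_nonneg (j:ℕ); omega)
      rw [h3, hθ0 i hi, add_zero, ih i hi]
  have hfroz : ∀ (n:ℕ) (i:ℤ), 1 ≤ i → F (n+1) i = F n i :=
    fun n i hi => (hfrozen (n+1) i hi).trans (hfrozen n i hi).symm
  have hP := ConjOdoAux.period_lemma hp θ F hstep hfroz
  choose jf hper hinjw using hP
  have hIter : ∀ m s n, Win p m (F (n + s * p ^ jf m)) (F n) := by
    intro m s
    induction s with
    | zero => intro n; simpa using Win.rfl (F n)
    | succ s ihs =>
      intro n i hi
      have h1 : n + (s+1) * p ^ jf m = (n + s * p ^ jf m) + p ^ jf m := by ring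
      rw [h1]
      exact (hper m (n + s * p ^ jf m) i hi).trans (ihs n i hi)
  have hperDvd : ∀ m a b, a ≡ b [MOD p ^ jf m] → Win p m (F a) (F b) := by
    have key : ∀ m a b, a ≤ b → a ≡ b [MOD p ^ jf m] → Win p m (F b) (F a) := by
      intro m a b hle hab
      obtain ⟨c, hc⟩ := (Nat.modEq_iff_dvd' hle).mp hab
      have hbc : b = a + c * p ^ jf m := by rw [Nat.mul_comm] at hc; omega
      rw [hbc]
      exact hIter m c a
    intro m a b hab
    rcases Nat.le_total a b with h | h
    · exact (key m a b h hab).symm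
    · exact key m b a h hab.symm
  have hUnb : ∀ k, ∃ m, k ≤ jf m := by
    by_contra hcon
    push_neg at hcon
    obtain ⟨k, hk⟩ := hcon
    have hxp : F (p ^ k) = F 0 := by
      funext i
      obtain ⟨m, hm⟩ : ∃ m : ℕ, 1 - (m:ℤ) ≤ i := ⟨(1-i).toNat, by omega⟩
      obtain ⟨s, hs⟩ : ∃ s, p ^ k = s * p ^ jf m :=
        ⟨p ^ (k - jf m), by rw [← pow_add]; congr 1; have := hk m; omega⟩
      have h2 : F (s * p ^ jf m) i = F 0 i := by simpa using hIter m s 0 i hm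
      rw [hs]
      exact h2
    have hper' : ∀ n, F (n + p ^ k) = F n := by
      intro n
      show Φ^[n + p ^ k] x = Φ^[n] x
      rw [Function.iterate_add_apply]
      exact congrArg _ hxp
    have hrep : ∀ a b, F (a + p ^ k * b) = F a := by
      intro a b
      induction b with
      | zero => simp
      | succ b ihb =>
        have h1 : a + p ^ k * (b+1) = (a + p ^ k * b) + p ^ k := by ring
        rw [h1, hper', ihb]
    have hmodF : ∀ n, F n = F (n % p ^ k) := by
      intro n
      conv_lhs => rw [← Nat.mod_add_div n (p ^ k)]
      exact hrep _ _
    apply hinf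
    have hsub : fwdOrbit Φ x ⊆ F '' (Set.Iio (p ^ k)) := by
      rintro w ⟨n, rfl⟩
      exact ⟨n % p ^ k, Nat.mod_lt n (pow_pos hp.pos k), (hmodF n).symm⟩
    exact Set.Finite.subset ((Set.finite_Iio _).image F) hsub
  choose M hM using hUnb
  have hMuniq : ∀ k a b, Win p (M k) (F a) (F b) → a ≡ b [MOD p ^ k] :=
    fun k a b h => Nat.ModEq.of_dvd (pow_dvd_pow p (hM k)) (hinjw (M k) a b h)
  -- closure facts
  have hConst : ∀ y ∈ C, ∀ i : ℤ, 1 ≤ i → y i = x i := by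
    intro y hy
    have hcl : IsClosed {z : ℤ → ZMod p | ∀ i : ℤ, 1 ≤ i → z i = x i} := by
      have heq : {z : ℤ → ZMod p | ∀ i : ℤ, 1 ≤ i → z i = x i}
          = ⋂ (i : ℤ), ⋂ (_ : 1 ≤ i), {z : ℤ → ZMod p | z i = x i} := by
        ext z
        simp [Set.mem_iInter]
      rw [heq]
      exact isClosed_iInter fun i => isClosed_iInter fun _ =>
        isClosed_eq (continuous_apply i) continuous_const
    exact closure_minimal (by rintro w ⟨n, rfl⟩; exact fun i hi => hfrozen n i hi) hcl hy
  have hCwin : ∀ y ∈ C, ∀ m : ℕ, ∃ n : ℕ, Win p m y (F n) := by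
    intro y hy m
    let g : (ℤ → ZMod p) → (Fin m → ZMod p) := fun z t => z (1 - (m:ℤ) + ((t:ℕ):ℤ))
    have hgc : Continuous g := continuous_pi fun t => continuous_apply _
    have himg : g y ∈ closure (g '' (fwdOrbit Φ x)) :=
      image_closure_subset_closure_image hgc ⟨y, hy, rfl⟩
    rw [IsClosed.closure_eq (isClosed_discrete _)] at himg
    obtain ⟨y', hy', hgy⟩ := himg
    obtain ⟨n, rfl⟩ := hy'
    refine ⟨n, ?_⟩
    intro i hi
    rcases le_or_gt 1 i with h1 | h1
    · rw [hConst y hy i h1]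
      exact (hfrozen n i h1).symm
    · have hlt : (i + m - 1).toNat < m := by omega
      have h5 : F n (1 - (m:ℤ) + (((i + m - 1).toNat : ℕ) : ℤ))
          = y (1 - (m:ℤ) + (((i + m - 1).toNat : ℕ) : ℤ)) :=
        congrFun hgy ⟨(i + m - 1).toNat, hlt⟩
      have harg : (1 - (m:ℤ) + (((i + m - 1).toNat : ℕ) : ℤ)) = i := by omega
      rw [harg] at h5
      exact h5.symm
  have hCwin' : ∀ y : ℤ → ZMod p, (∀ m : ℕ, ∃ n, Win p m y (F n)) → y ∈ C := by
    intro y hwin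
    choose nseq hnseq using hwin
    have htd : Filter.Tendsto (fun m => F (nseq m)) Filter.atTop (nhds y) := by
      rw [tendsto_pi_nhds]
      intro i
      apply Filter.Tendsto.congr' _ tendsto_const_nhds
      refine (Filter.eventually_atTop).mpr ⟨(1 - i).toNat, fun m hm => ?_⟩
      exact hnseq m i (by omega)
    exact mem_closure_of_tendsto htd (Filter.Eventually.of_forall fun m => ⟨nseq m, rfl⟩)
  have hWinStep : ∀ m y n, Win p m y (F n) → Win p m (Φ y) (F (n+1)) := by
    intro m y n h i hi
    have harg : (fun j : Fin r => y (i + 1 + (j:ℕ))) = fun j : Fin r => F n (i + 1 + (j:ℕ)) := by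
      funext j
      exact h (i + 1 + (j:ℕ)) (by have := Int.natCast_nonneg (j:ℕ); omega)
    rw [hFs, hΦ, hΦ, h i hi, harg]
  have hMaps : Set.MapsTo Φ C C := by
    intro y hy
    apply hCwin'
    intro m
    obtain ⟨n, hn⟩ := hCwin y hy m
    exact ⟨n + 1, hWinStep m y n hn⟩
  -- the address function
  set A : (ℤ → ZMod p) → ℕ → ℕ := fun y k =>
    if h : ∃ n, Win p (M k) y (F n) then h.choose % p ^ k else 0 with hAdef
  have hA_eq : ∀ y k n, Win p (M k) y (F n) → A y k = n % p ^ k := by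
    intro y k n hn
    have hex : ∃ n', Win p (M k) y (F n') := ⟨n, hn⟩
    have hspec := hex.choose_spec
    have hmod : hex.choose ≡ n [MOD p ^ k] := hMuniq k _ _ (hspec.symm.trans hn)
    simp only [hAdef, dif_pos hex]
    exact hmod
  set Ψf : (ℤ → ZMod p) → ℕ → ZMod p := fun y n => ((A y (n+1) / p ^ n : ℕ) : ZMod p) with hΨfdef
  have hWit : ∀ y ∈ C, ∀ m0 : ℕ, ∃ n, ∀ m ≤ m0, Win p m y (F n) := by
    intro y hy m0
    obtain ⟨n, hn⟩ := hCwin y hy m0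
    exact ⟨n, fun m hm => Win.mono hm hn⟩
  have hpsival : ∀ y ∈ C, ∀ k, pval p k (Ψf y) = A y k := by
    intro y hy k
    obtain ⟨n, hn⟩ := hWit y hy ((Finset.range (k+1)).sup M)
    have hwin : ∀ i ≤ k, Win p (M i) y (F n) :=
      fun i hi => hn (M i) (Finset.le_sup (Finset.mem_range.mpr (by omega)))
    have hAk : ∀ i ≤ k, A y i = n % p ^ i := fun i hi => hA_eq y i n (hwin i hi)
    have hdig : ∀ i < k, Ψf y i = ((n / p ^ i : ℕ) : ZMod p) := by
      intro i hi
      simp only [hΨfdef]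
      rw [hAk (i+1) (by omega),
        show n % p ^ (i+1) / p ^ i = n / p ^ i % p from by
          rw [pow_succ, Nat.mod_mul_right_div_self]]
      exact ZMod.natCast_mod _ p
    have hsum : pval p k (Ψf y) = pval p k (fun i => ((n / p ^ i : ℕ) : ZMod p)) := by
      unfold ConjOdoAux.pval
      exact Finset.sum_congr rfl fun i hi => by rw [hdig i (Finset.mem_range.mp hi)]
    rw [hsum, ConjOdoAux.pval_digits hp1, hAk k le_rfl]
  have hAstep : ∀ y ∈ C, ∀ k, A (Φ y) k = (A y k + 1) % p ^ k := by
    intro y hy k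
    obtain ⟨n, hn⟩ := hCwin y hy (M k)
    rw [hA_eq y k n hn, hA_eq (Φ y) k (n+1) (hWinStep (M k) y n hn)]
    exact ((Nat.mod_modEq n (p ^ k)).add_right 1).symm
  have hconj : ∀ y ∈ C, Ψf (Φ y) = odometer (fun _ => p) (Ψf y) := by
    intro y hy
    apply ConjOdoAux.pval_inj hp1
    intro k
    rw [hpsival (Φ y) (hMaps hy) k, ConjOdoAux.pval_odometer hp1, hpsival y hy k, hAstep y hy k]
  have hinj : ∀ y ∈ C, ∀ y' ∈ C, Ψf y = Ψf y' → y = y' := by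
    intro y hy y' hy' he
    have hA' : ∀ k, A y k = A y' k := by
      intro k
      rw [← hpsival y hy k, ← hpsival y' hy' k, he]
    funext i
    rcases le_or_gt 1 i with h1 | h1
    · rw [hConst y hy i h1, hConst y' hy' i h1]
    · set m : ℕ := (1 - i).toNat with hm
      have him : 1 - (m:ℤ) ≤ i := by omega
      obtain ⟨n, hn⟩ := hWit y hy (max m (M (jf m)))
      obtain ⟨n', hn'⟩ := hWit y' hy' (max m (M (jf m)))
      have h2 : A y (jf m) = n % p ^ jf m := hA_eq y (jf m) n (hn (M (jf m)) (le_max_right _ _))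
      have h3 : A y' (jf m) = n' % p ^ jf m := hA_eq y' (jf m) n' (hn' (M (jf m)) (le_max_right _ _))
      have h4 : n ≡ n' [MOD p ^ jf m] := by
        show n % p ^ jf m = n' % p ^ jf m
        rw [← h2, ← h3, hA' (jf m)]
      have h5 := hperDvd m n n' h4
      calc y i = F n i := hn m (le_max_left _ _) i him
        _ = F n' i := h5 i him
        _ = y' i := (hn' m (le_max_left _ _) i him).symm
  have hsurj : ∀ z : ℕ → ZMod p, ∃ y, y ∈ C ∧ Ψf y = z := by
    intro z
    set N : ℕ → ℕ := fun k => pval p k z with hN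
    set K : ℕ → ℕ := fun m => (Finset.range (m+1)).sup jf with hK
    have hjK : ∀ m, jf m ≤ K m := fun m => Finset.le_sup (Finset.mem_range.mpr (by omega))
    have hKmono : ∀ {m m'}, m ≤ m' → K m ≤ K m' := by
      intro m m' h
      exact Finset.sup_mono (Finset.range_subset_range.mpr (by omega))
    have hNcomp : ∀ {k k'}, k ≤ k' → N k' % p ^ k = N k := fun h => pval_mod_pow hp1 z h
    set y : ℤ → ZMod p := fun i => F (N (K ((1 - i).toNat))) i with hy
    have hywin : ∀ m, Win p m y (F (N (K m))) := by
      intro m i hi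
      simp only [hy]
      set m' : ℕ := (1 - i).toNat with hm'
      have hm'm : m' ≤ m := by omega
      have h6 : N (K m) ≡ N (K m') [MOD p ^ jf m'] := by
        have h7 : N (K m) % p ^ K m' = N (K m') := hNcomp (hKmono hm'm)
        have h8 : N (K m) ≡ N (K m') [MOD p ^ K m'] := by
          show N (K m) % p ^ K m' = N (K m') % p ^ K m'
          rw [h7, Nat.mod_eq_of_lt (pval_lt hp1 _ z)]
        exact Nat.ModEq.of_dvd (pow_dvd_pow p (hjK m')) h8
      have h8 := hperDvd m' (N (K m')) (N (K m)) h6.symm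
      have him' : 1 - (m':ℤ) ≤ i := by omega
      exact h8 i him'
    have hyC : y ∈ C := hCwin' y (fun m => ⟨N (K m), hywin m⟩)
    refine ⟨y, hyC, ?_⟩
    apply ConjOdoAux.pval_inj hp1
    intro k
    rw [hpsival y hyC k]
    have h9 : A y k = N (K (M k)) % p ^ k := hA_eq y k _ (hywin (M k))
    have h10 : k ≤ K (M k) := le_trans (hM k) (hjK (M k))
    rw [h9, hNcomp h10]
  -- assemble
  haveI : CompactSpace (↥C) := isCompact_iff_compactSpace.mp (isClosed_closure.isCompact)
  let e : C → (ℕ → ZMod p) := fun y => Ψf y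
  have hbij : Function.Bijective e := by
    constructor
    · intro y y' h
      exact Subtype.ext (hinj y y.2 y' y'.2 h)
    · intro z
      obtain ⟨y, hyC, hyz⟩ := hsurj z
      exact ⟨⟨y, hyC⟩, hyz⟩
  have hcont : Continuous e := by
    apply continuous_pi
    intro n
    set m' := M (n+1) with hm'
    let res : C → (Fin m' → ZMod p) := fun y t => (y : ℤ → ZMod p) (1 - (m':ℤ) + ((t:ℕ):ℤ))
    have hresc : Continuous res := continuous_pi fun t => (continuous_apply _).comp continuous_subtype_val
    let gg : (Fin m' → ZMod p) → ZMod p := fun w =>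
      if h : ∃ y : C, res y = w then Ψf ((h.choose : C) : ℤ → ZMod p) n else 0
    have hfac : ∀ y : C, e y n = gg (res y) := by
      intro y
      have hex : ∃ y' : C, res y' = res y := ⟨y, rfl⟩
      have hgg : gg (res y) = Ψf ((hex.choose : C) : ℤ → ZMod p) n := dif_pos hex
      rw [hgg]
      have hres : res hex.choose = res y := hex.choose_spec
      obtain ⟨nw, hnw⟩ := hCwin (y : ℤ → ZMod p) y.2 m'
      have hnw' : Win p m' (hex.choose : ℤ → ZMod p) (F nw) := by
        intro i hi
        rcases le_or_gt 1 i with h1 | h1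
        · rw [hConst _ hex.choose.2 i h1]
          exact (hfrozen nw i h1).symm
        · have hlt : (i + m' - 1).toNat < m' := by omega
          have h5 : (hex.choose : ℤ → ZMod p) (1 - (m':ℤ) + (((i + m' - 1).toNat : ℕ) : ℤ))
              = (y : ℤ → ZMod p) (1 - (m':ℤ) + (((i + m' - 1).toNat : ℕ) : ℤ)) :=
            congrFun hres ⟨(i + m' - 1).toNat, hlt⟩
          have harg : (1 - (m':ℤ) + (((i + m' - 1).toNat : ℕ) : ℤ)) = i := by omega
          rw [harg] at h5
          rw [h5]
          exact hnw i hi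
      have hAeq : A (hex.choose : ℤ → ZMod p) (n+1) = A (y : ℤ → ZMod p) (n+1) := by
        rw [hA_eq _ _ _ hnw', hA_eq _ _ _ (hnw)]
      show Ψf ((y : C) : ℤ → ZMod p) n = _
      simp only [hΨfdef]
      rw [hAeq]
    have hfac' : (fun y : C => e y n) = gg ∘ res := funext hfac
    rw [show (fun y : C => e y n) = gg ∘ res from hfac']
    exact continuous_of_discreteTopology.comp hresc
  refine ⟨hMaps, Continuous.homeoOfEquivCompactToT2 (f := Equiv.ofBijective e hbij) hcont, ?_⟩
  intro y
  exact hconj (y : ℤ → ZMod p) y.2
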